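/- For every integer n ≥ 1 and all x in [-1, 1], |(1 - x^2) * L_n'(x)| / (n(n+1)) ≤ Γ(n/2) / (sqrt(π) * (n+1) * Γ((n+1)/2)). -/

import Mathlib

/-- The `n`-th Legendre polynomial on `ℝ`, via the Rodrigues formula,
normalized so that `legendre n 1 = 1`. -/
noncomputable def legendre (n : ℕ) : ℝ → ℝ :=
  fun x => (1 / (2 ^ n * (n.factorial : ℝ))) * iteratedDeriv n (fun y : ℝ => (y ^ 2 - 1) ^ n) x

open Polynomial


noncomputable def Uu (n : ℕ) : Polynomial ℝ := ((X : Polynomial ℝ)^2 - 1)^n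

noncomputable def legP (n : ℕ) : Polynomial ℝ :=
  C (1 / (2^n * (n.factorial : ℝ))) * (derivative^[n] (Uu n))

lemma iteratedDeriv_polyeval (k : ℕ) (p : Polynomial ℝ) :
    iteratedDeriv k (fun x => p.eval x) = fun x => (derivative^[k] p).eval x := by
  induction k generalizing p with
  | zero => simp
  | succ k ih =>
    have hd : (deriv fun x => p.eval x) = fun x => (derivative p).eval x :=
      funext fun x => Polynomial.deriv p
    rw [iteratedDeriv_succ', hd, ih, Function.iterate_succ_apply]

lemma legendre_eq (n : ℕ) : legendre n = fun x => (legP n).eval x := by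
  funext x
  have h : (fun y : ℝ => (y ^ 2 - 1) ^ n) = fun y => (Uu n).eval y := by
    funext y; simp [Uu]
  simp only [legendre, h, iteratedDeriv_polyeval, legP, eval_mul, eval_C]

lemma rec_base (n : ℕ) (hn : 1 ≤ n) :
    ((X : Polynomial ℝ)^2 - 1) * derivative (Uu n) = C (2 * (n:ℝ)) * X * Uu n := by
  obtain ⟨m, rfl⟩ : ∃ m, n = m + 1 := ⟨n - 1, (Nat.succ_pred_eq_of_pos hn).symm⟩
  have hp : ((X:Polynomial ℝ)^2 - 1)^(m+1) = ((X:Polynomial ℝ)^2-1)^m * ((X:Polynomial ℝ)^2-1) :=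
    pow_succ _ _
  rw [Uu, derivative_pow, hp]
  simp only [derivative_sub, derivative_one, derivative_X_pow, Nat.add_sub_cancel, sub_zero,
    map_natCast, map_ofNat, C_mul, C_add, C_1, pow_one, show (2-1 : ℕ) = 1 from rfl]
  push_cast
  ring

lemma rec_step (n : ℕ) (hn : 1 ≤ n) (k : ℕ) :
    ((X : Polynomial ℝ)^2 - 1) * derivative^[k+2] (Uu n) =
      C (2*(n:ℝ) - 2*(k+1)) * X * derivative^[k+1] (Uu n)
        + C (((k:ℝ)+1) * (2*n - k)) * derivative^[k] (Uu n) := by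
  induction k with
  | zero =>
    have h := congrArg derivative (rec_base n hn)
    simp only [derivative_mul, derivative_add, derivative_sub, derivative_one, derivative_X_pow,
      derivative_C, derivative_X, derivative_natCast, derivative_ofNat, map_natCast, map_ofNat,
      C_mul, C_add, C_sub, C_1, show (2-1 : ℕ) = 1 from rfl, pow_one] at h
    rw [show derivative^[0+2] (Uu n) = derivative (derivative (Uu n)) from rfl,
      show derivative^[0+1] (Uu n) = derivative (Uu n) from rfl,
      show derivative^[0] (Uu n) = Uu n from rfl]
    simp only [map_natCast, map_ofNat, C_mul, C_add, C_sub, C_1]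
    push_cast
    push_cast at h
    linear_combination h
  | succ k ih =>
    have h := congrArg derivative ih
    simp only [derivative_mul, derivative_add, derivative_sub, derivative_one, derivative_X_pow,
      derivative_C, derivative_X, derivative_natCast, derivative_ofNat, map_natCast, map_ofNat,
      C_mul, C_add, C_sub, C_1, show (2-1 : ℕ) = 1 from rfl, pow_one] at h
    rw [show derivative^[k+1+2] (Uu n) = derivative (derivative^[k+2] (Uu n)) from
      (Function.iterate_succ_apply' _ _ _),
      show derivative^[k+1+1] (Uu n) = derivative (derivative^[k+1] (Uu n)) from
      (Function.iterate_succ_apply' _ _ _)] at *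
    rw [show derivative^[k+1] (Uu n) = derivative (derivative^[k] (Uu n)) from
      (Function.iterate_succ_apply' _ _ _)] at *
    simp only [map_natCast, map_ofNat, C_mul, C_add, C_sub, C_1]
    push_cast
    push_cast at h
    linear_combination h

lemma V_ode (n : ℕ) (hn : 1 ≤ n) :
    ((X : Polynomial ℝ)^2 - 1) * derivative (derivative (derivative^[n] (Uu n)))
      + C 2 * X * derivative (derivative^[n] (Uu n))
      = C ((n:ℝ) * (n+1)) * derivative^[n] (Uu n) := by
  obtain ⟨m, rfl⟩ : ∃ m, n = m + 1 := ⟨n - 1, (Nat.succ_pred_eq_of_pos hn).symm⟩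
  have key := rec_step (m+1) hn m
  rw [show derivative^[m+2] (Uu (m+1)) = derivative (derivative^[m+1] (Uu (m+1))) from
    Function.iterate_succ_apply' _ _ _] at key
  have h := congrArg derivative key
  simp only [derivative_mul, derivative_add, derivative_sub, derivative_one, derivative_X_pow,
    derivative_C, derivative_X, derivative_natCast, derivative_ofNat, map_natCast, map_ofNat,
    C_mul, C_add, C_sub, C_1, show (2-1 : ℕ) = 1 from rfl, pow_one] at h
  rw [show derivative^[m+1] (Uu (m+1)) = derivative (derivative^[m] (Uu (m+1))) from
    Function.iterate_succ_apply' _ _ _] at h ⊢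
  simp only [map_natCast, map_ofNat, C_mul, C_add, C_sub, C_1]
  push_cast
  push_cast at h
  linear_combination h

lemma legP_ode (n : ℕ) (hn : 1 ≤ n) :
    ((X : Polynomial ℝ)^2 - 1) * derivative (derivative (legP n))
      + C 2 * X * derivative (legP n) = C ((n:ℝ) * (n+1)) * legP n := by
  have h := V_ode n hn
  simp only [legP, derivative_mul, derivative_C, zero_mul, zero_add]
  linear_combination C (1 / (2^n * (n.factorial : ℝ))) * h


lemma Uu_eq_sum (n : ℕ) :
    Uu n = ∑ k ∈ Finset.range (n+1), C ((-1:ℝ)^(n-k) * n.choose k) * X^(2*k) := by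
  rw [Uu, sub_eq_add_neg, add_pow]
  refine Finset.sum_congr rfl fun k _ => ?_
  rw [← pow_mul]
  simp only [map_mul, map_pow, map_neg, C_1, map_natCast]
  ring

lemma coeff_Uu (n j : ℕ) (hj : j ≤ n) :
    (Uu n).coeff (2*j) = (-1:ℝ)^(n-j) * n.choose j := by
  rw [Uu_eq_sum, finset_sum_coeff]
  simp only [coeff_C_mul, coeff_X_pow]
  rw [Finset.sum_eq_single j]
  · simp
  · intro b _ hbj
    rw [if_neg (by omega), mul_zero]
  · intro h; exact absurd (Finset.mem_range.2 (Nat.lt_succ_of_le hj)) h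

lemma coeff_Uu_odd (n j : ℕ) : (Uu n).coeff (2*j+1) = 0 := by
  rw [Uu_eq_sum, finset_sum_coeff]
  refine Finset.sum_eq_zero fun b _ => ?_
  simp only [coeff_C_mul, coeff_X_pow]
  rw [if_neg (by omega), mul_zero]

lemma eval0_iterate (n k : ℕ) (p : Polynomial ℝ) :
    (derivative^[k] p).eval 0 = (k.factorial : ℝ) * p.coeff k := by
  rw [← coeff_zero_eq_eval_zero, coeff_iterate_derivative, zero_add, nsmul_eq_mul,
    Nat.descFactorial_self]

lemma legP_eval0 (n : ℕ) : (legP n).eval 0 = (Uu n).coeff n / 2^n := by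
  rw [legP, eval_mul, eval_C, ← coeff_zero_eq_eval_zero, coeff_iterate_derivative, zero_add,
    nsmul_eq_mul, Nat.descFactorial_self]
  have h : ((n.factorial : ℝ)) ≠ 0 := Nat.cast_ne_zero.2 n.factorial_ne_zero
  field_simp

lemma legP_deriv0 (n : ℕ) :
    (derivative (legP n)).eval 0 = (n+1 : ℝ) * (Uu n).coeff (n+1) / 2^n := by
  rw [legP, derivative_mul, derivative_C, zero_mul, zero_add, eval_mul, eval_C,
    ← Function.iterate_succ_apply' derivative n (Uu n), ← coeff_zero_eq_eval_zero,
    coeff_iterate_derivative, zero_add, nsmul_eq_mul, Nat.descFactorial_self]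
  have h : ((n.factorial : ℝ)) ≠ 0 := Nat.cast_ne_zero.2 n.factorial_ne_zero
  rw [Nat.factorial_succ]
  push_cast
  field_simp

lemma legP_eval0_even (m : ℕ) :
    (legP (2*m)).eval 0 = (-1:ℝ)^m * ((2*m).choose m) / 4^m := by
  rw [legP_eval0, show 2*m = 2*m from rfl, coeff_Uu (2*m) m (by omega)]
  rw [show 2*m - m = m by omega]
  rw [show ((2:ℝ))^(2*m) = 4^m by rw [pow_mul]; norm_num]

lemma legP_eval0_odd (m : ℕ) : (legP (2*m+1)).eval 0 = 0 := by
  rw [legP_eval0, coeff_Uu_odd (2*m+1) m]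
  simp

lemma legP_deriv0_even (m : ℕ) : (derivative (legP (2*m))).eval 0 = 0 := by
  rw [legP_deriv0, coeff_Uu_odd (2*m) m]
  simp

lemma legP_deriv0_odd (m : ℕ) :
    (derivative (legP (2*m+1))).eval 0
      = (-1:ℝ)^m * (2*m+2) * ((2*m+1).choose (m+1)) / 2^(2*m+1) := by
  rw [legP_deriv0, show 2*m+1+1 = 2*(m+1) from by ring, coeff_Uu (2*m+1) (m+1) (by omega)]
  rw [show 2*m+1 - (m+1) = m by omega]
  push_cast
  ring


lemma Gamma_nat_add_half (m : ℕ) :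
    Real.Gamma ((m:ℝ) + 1/2) = Real.sqrt Real.pi * (2*m).factorial / (4^m * m.factorial) := by
  induction m with
  | zero =>
    rw [show ((0:ℕ):ℝ) + 1/2 = 1/2 by norm_num, Real.Gamma_one_half_eq]
    simp
  | succ m ih =>
    have h0 : ((m:ℝ) + 1/2) ≠ 0 := by positivity
    have h : ((m+1:ℕ):ℝ) + 1/2 = ((m:ℝ) + 1/2) + 1 := by push_cast; ring
    rw [h, Real.Gamma_add_one h0, ih]
    have e1 : (2*(m+1)) = (2*m+1) + 1 := by ring
    rw [e1, Nat.factorial_succ, Nat.factorial_succ, Nat.factorial_succ]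
    have hb : ((m.factorial : ℝ)) ≠ 0 := Nat.cast_ne_zero.2 m.factorial_ne_zero
    have h4 : ((4:ℝ)^m) ≠ 0 := by positivity
    push_cast
    field_simp
    ring

open Real.Wallis in
lemma wallis_key (m : ℕ) (hm : 1 ≤ m) :
    Real.pi^2 * (2*(m:ℝ)) ≤ 4 * (W m)^2 * (2*m+1) := by
  set f : ℕ → ℝ := fun k => (W (k+1))^2 * (2*(k+1)+1)/(k+1) with hf
  have hanti : Antitone f := by
    apply antitone_nat_of_succ_le
    intro k
    have hW := W_pos (k+1)
    have hfk : f (k+1) = (W (k+1) * ((2*(k+1)+2)/(2*(k+1)+1) * ((2*(k+1)+2)/(2*(k+1)+3))))^2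
        * (2*((k:ℝ)+1+1)+1)/((k:ℝ)+1+1) := by
      simp only [hf]
      rw [W_succ]
      push_cast
      ring_nf
    rw [hfk, hf]
    have hk1 : (0:ℝ) < (k:ℝ)+1 := by positivity
    have hk2 : (0:ℝ) < (k:ℝ)+1+1 := by positivity
    have h3 : (0:ℝ) < 2*((k:ℝ)+1)+1 := by positivity
    have h5 : (0:ℝ) < 2*((k:ℝ)+1)+3 := by positivity
    rw [div_le_div_iff₀ hk2 hk1]
    have key : ((2*((k:ℝ)+1)+2)/(2*((k:ℝ)+1)+1) * ((2*((k:ℝ)+1)+2)/(2*((k:ℝ)+1)+3)))^2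
        * ((2*((k:ℝ)+1+1)+1) * ((k:ℝ)+1)) ≤ (2*((k:ℝ)+1)+1) * ((k:ℝ)+1+1) := by
      rw [div_mul_div_comm, div_pow, div_mul_eq_mul_div, div_le_iff₀ (by positivity)]
      nlinarith [sq_nonneg ((k:ℝ)+1), hk1.le]
    calc (W (k+1) * ((2*((k:ℝ)+1)+2)/(2*((k:ℝ)+1)+1) * ((2*((k:ℝ)+1)+2)/(2*((k:ℝ)+1)+3))))^2
          * (2*((k:ℝ)+1+1)+1) * ((k:ℝ)+1)
        = (W (k+1))^2 * (((2*((k:ℝ)+1)+2)/(2*((k:ℝ)+1)+1) * ((2*((k:ℝ)+1)+2)/(2*((k:ℝ)+1)+3)))^2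
          * ((2*((k:ℝ)+1+1)+1) * ((k:ℝ)+1))) := by ring
      _ ≤ (W (k+1))^2 * ((2*((k:ℝ)+1)+1) * ((k:ℝ)+1+1)) := by
          exact mul_le_mul_of_nonneg_left key (by positivity)
      _ = (W (k+1))^2 * (2*((k:ℝ)+1)+1) * ((k:ℝ)+1+1) := by ring
  have hlim : Filter.Tendsto f Filter.atTop (nhds (Real.pi^2/2)) := by
    have hW : Filter.Tendsto (fun k => W (k+1)) Filter.atTop (nhds (Real.pi/2)) :=
      tendsto_W_nhds_pi_div_two.comp (Filter.tendsto_add_atTop_nat 1)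
    have hr : Filter.Tendsto (fun k : ℕ => (2*((k:ℝ)+1)+1)/((k:ℝ)+1)) Filter.atTop (nhds 2) := by
      have : ∀ k : ℕ, (2*((k:ℝ)+1)+1)/((k:ℝ)+1) = 2 + 1/((k:ℝ)+1) := by
        intro k
        have : ((k:ℝ)+1) ≠ 0 := by positivity
        field_simp
      simp only [this]
      have := tendsto_one_div_add_atTop_nhds_zero_nat (𝕜 := ℝ)
      have h2 : Filter.Tendsto (fun k : ℕ => (2:ℝ) + 1/((k:ℝ)+1)) Filter.atTop (nhds (2 + 0)) :=
        Filter.Tendsto.add tendsto_const_nhds this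
      simpa using h2
    have := ((hW.pow 2).mul hr)
    have heq : (Real.pi/2)^2 * 2 = Real.pi^2/2 := by ring
    rw [heq] at this
    convert this using 2 with k
    simp only [hf]
    push_cast
    ring
  have hge : Real.pi^2/2 ≤ f (m-1) := hanti.le_of_tendsto hlim (m-1)
  have hm1 : m - 1 + 1 = m := Nat.succ_pred_eq_of_pos hm
  rw [hf] at hge
  simp only [hm1] at hge
  have hmpos : (0:ℝ) < (m:ℝ) := by exact_mod_cast hm
  have hc : ((m-1:ℕ):ℝ) + 1 = (m:ℝ) := by
    have := hm1; push_cast [Nat.cast_sub hm]; ring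
  rw [hc] at hge
  rw [div_le_div_iff₀ (by norm_num) hmpos] at hge
  nlinarith [hge]

lemma odd_base (m : ℕ) :
    (2*(m:ℝ)+2) * (((2*m+1).choose (m+1) : ℝ)) / 2^(2*m+1)
      = (2*(m:ℝ)+1) * ((2*m).factorial:ℝ) / (4^m * ((m.factorial:ℝ))^2) := by
  rw [Nat.cast_choose ℝ (show m+1 ≤ 2*m+1 by omega)]
  rw [show 2*m+1 - (m+1) = m by omega]
  rw [show (2*m+1) = (2*m)+1 from rfl, Nat.factorial_succ, Nat.factorial_succ]
  have hb : ((m.factorial : ℝ)) ≠ 0 := Nat.cast_ne_zero.2 m.factorial_ne_zero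
  have ha : (((2*m).factorial : ℝ)) ≠ 0 := Nat.cast_ne_zero.2 (2*m).factorial_ne_zero
  have h2 : ((2:ℝ))^(2*m+1) = 2 * 4^m := by
    rw [pow_succ, pow_mul]; norm_num; ring
  rw [h2]
  push_cast
  field_simp

lemma even_case (m : ℕ) (hm : 1 ≤ m) :
    (2*(m:ℝ)) * (2*m+1) * (((2*m).choose m : ℝ) / 4^m)^2
      ≤ (2 * 4^m * ((m.factorial:ℝ))^2 / (Real.pi * (2*m).factorial))^2 := by
  have key := wallis_key m hm
  rw [Real.Wallis.W_eq_factorial_ratio] at key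
  set A := (((2*m).factorial : ℝ)) with hA
  set B := ((m.factorial : ℝ)) with hB
  have hApos : 0 < A := by rw [hA]; exact_mod_cast (2*m).factorial_pos
  have hBpos : 0 < B := by rw [hB]; exact_mod_cast m.factorial_pos
  have hchoose : (((2*m).choose m : ℝ)) = A / (B * B) := by
    rw [Nat.cast_choose ℝ (show m ≤ 2*m by omega), show 2*m - m = m by omega]
  rw [hchoose]
  have h216 : ((2:ℝ))^(4*m) = (4^m)^2 := by
    rw [show (4:ℝ) = 2^2 by norm_num, ← pow_mul, ← pow_mul]
    congr 1
    omega
  rw [h216] at key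
  have hpi := Real.pi_pos
  have h4 : (0:ℝ) < (4:ℝ)^m := by positivity
  have hm' : (0:ℝ) < (m:ℝ) := by exact_mod_cast hm
  have hden : (0:ℝ) < 2*(m:ℝ)+1 := by positivity
  set Q := ((4:ℝ)^m) with hQ
  have hrhs : 4 * ((Q^2 * B^4) / (A^2 * (2*(m:ℝ)+1)))^2 * (2*(m:ℝ)+1)
      = 4*Q^4*B^8 / (A^4*(2*(m:ℝ)+1)) := by
    field_simp
  rw [hrhs, le_div_iff₀ (by positivity)] at key
  have e1 : (2*(m:ℝ)) * (2*m+1) * ((A / (B*B)) / Q)^2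
      = (2*(m:ℝ)*(2*m+1)*A^2) / (B^4*Q^2) := by
    field_simp
  have e2 : (2 * Q * B^2 / (Real.pi * A))^2 = (4*Q^2*B^4) / (Real.pi^2*A^2) := by
    rw [div_pow]
    ring_nf
  rw [e1, e2, div_le_div_iff₀ (by positivity) (by positivity)]
  nlinarith [key]

noncomputable def Hh (n : ℕ) : Polynomial ℝ :=
  ((1 - X^2) * derivative (legP n))^2 + C ((n:ℝ)*((n:ℝ)+1)) * (1 - X^2) * (legP n)^2

lemma Hh_deriv (n : ℕ) (hn : 1 ≤ n) :
    derivative (Hh n) = C (-2*(n:ℝ)*((n:ℝ)+1)) * X * (legP n)^2 := by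
  have h := legP_ode n hn
  simp only [Hh, derivative_add, derivative_mul, derivative_pow, derivative_sub, derivative_one,
    derivative_X_pow, derivative_C, derivative_X, derivative_ofNat, derivative_natCast,
    map_natCast, map_ofNat, C_mul, C_add, C_sub, C_neg, C_1, show (2-1:ℕ)=1 from rfl, pow_one]
  simp only [map_natCast, map_ofNat, C_mul, C_add, C_sub, C_neg, C_1] at h
  push_cast at h ⊢
  linear_combination (-(2:Polynomial ℝ) * (1 - X^2) * derivative (legP n)) * h

lemma Hh_eval0 (n : ℕ) :
    (Hh n).eval 0 = ((derivative (legP n)).eval 0)^2 + (n:ℝ)*((n:ℝ)+1)*((legP n).eval 0)^2 := by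
  simp [Hh]

lemma Hh_max (n : ℕ) (hn : 1 ≤ n) {x : ℝ} (hx : x ∈ Set.Icc (-1:ℝ) 1) :
    (Hh n).eval x ≤ (Hh n).eval 0 := by
  have hderiv : ∀ y : ℝ, deriv (fun y : ℝ => (Hh n).eval y) y
      = (-2*(n:ℝ)*((n:ℝ)+1)) * y * ((legP n).eval y)^2 := by
    intro y
    rw [Polynomial.deriv, Hh_deriv n hn]
    simp
  have hn0 : (0:ℝ) ≤ (n:ℝ) := Nat.cast_nonneg n
  obtain ⟨hx1, hx2⟩ := hx
  rcases le_total 0 x with h0 | h0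
  · have hanti : AntitoneOn (fun y : ℝ => (Hh n).eval y) (Set.Icc 0 1) := by
      apply antitoneOn_of_deriv_nonpos (convex_Icc 0 1)
      · exact ((Hh n).continuous).continuousOn
      · exact ((Hh n).differentiable).differentiableOn
      · intro y hy
        rw [interior_Icc] at hy
        rw [hderiv y]
        have hy0 : (0:ℝ) ≤ y := le_of_lt hy.1
        nlinarith [sq_nonneg ((legP n).eval y),
          mul_nonneg (mul_nonneg hn0 (by linarith : (0:ℝ) ≤ (n:ℝ)+1))
            (mul_nonneg hy0 (sq_nonneg ((legP n).eval y)))]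
    exact hanti (Set.mem_Icc.2 ⟨le_refl 0, by norm_num⟩) (Set.mem_Icc.2 ⟨h0, hx2⟩) h0
  · have hmono : MonotoneOn (fun y : ℝ => (Hh n).eval y) (Set.Icc (-1) 0) := by
      apply monotoneOn_of_deriv_nonneg (convex_Icc (-1) 0)
      · exact ((Hh n).continuous).continuousOn
      · exact ((Hh n).differentiable).differentiableOn
      · intro y hy
        rw [interior_Icc] at hy
        rw [hderiv y]
        have hy0 : y ≤ 0 := le_of_lt hy.2
        nlinarith [sq_nonneg ((legP n).eval y),
          mul_nonneg (mul_nonneg hn0 (by linarith : (0:ℝ) ≤ (n:ℝ)+1))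
            (mul_nonneg (by linarith : (0:ℝ) ≤ -y) (sq_nonneg ((legP n).eval y)))]
    exact hmono (Set.mem_Icc.2 ⟨hx1, h0⟩) (Set.mem_Icc.2 ⟨by norm_num, le_refl 0⟩) h0

lemma g_sq_le (n : ℕ) (hn : 1 ≤ n) {x : ℝ} (hx : x ∈ Set.Icc (-1:ℝ) 1) :
    ((1-x^2) * (derivative (legP n)).eval x)^2 ≤ (Hh n).eval 0 := by
  have h1 : ((1-x^2) * (derivative (legP n)).eval x)^2 ≤ (Hh n).eval x := by
    simp only [Hh, eval_add, eval_mul, eval_pow, eval_sub, eval_one, eval_C, eval_X]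
    have hx2 : x^2 ≤ 1 := by
      obtain ⟨h1, h2⟩ := hx
      nlinarith
    have hn0 : (0:ℝ) ≤ (n:ℝ) := Nat.cast_nonneg n
    nlinarith [mul_nonneg (mul_nonneg hn0 (by linarith : (0:ℝ) ≤ (n:ℝ)+1))
      (mul_nonneg (by linarith : (0:ℝ) ≤ 1 - x^2) (sq_nonneg ((legP n).eval x)))]
  exact le_trans h1 (Hh_max n hn hx)
theorem LL_gamma_bound (n : ℕ) (hn : 1 ≤ n) (x : ℝ) (hx : x ∈ Set.Icc (-1 : ℝ) 1) :
    |(1 - x ^ 2) * deriv (legendre n) x| / (n * (n + 1))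
      ≤ Real.Gamma ((n : ℝ) / 2)
          / (Real.sqrt Real.pi * ((n : ℝ) + 1) * Real.Gamma (((n : ℝ) + 1) / 2)) := by
  have hderiv_leg : deriv (legendre n) x = (derivative (legP n)).eval x := by
    rw [legendre_eq]; exact Polynomial.deriv _
  rw [hderiv_leg]
  have hnR : (0:ℝ) < (n:ℝ) := by exact_mod_cast hn
  have hnn : (0:ℝ) < (n:ℝ) * ((n:ℝ)+1) := by positivity
  have hpi := Real.pi_pos
  have hsqpi : (0:ℝ) < Real.sqrt Real.pi := Real.sqrt_pos.2 hpi
  have hsq2 : Real.sqrt Real.pi * Real.sqrt Real.pi = Real.pi := Real.mul_self_sqrt hpi.le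
  have hGpos1 : 0 < Real.Gamma ((n:ℝ)/2) := Real.Gamma_pos_of_pos (by positivity)
  have hGpos2 : 0 < Real.Gamma (((n:ℝ)+1)/2) := Real.Gamma_pos_of_pos (by positivity)
  set M : ℝ := (n:ℝ) * Real.Gamma ((n:ℝ)/2) / (Real.sqrt Real.pi * Real.Gamma (((n:ℝ)+1)/2))
    with hM
  have hMpos : 0 < M := by
    rw [hM]; exact div_pos (mul_pos hnR hGpos1) (mul_pos hsqpi hGpos2)
  have hRHS : Real.Gamma ((n : ℝ) / 2)
      / (Real.sqrt Real.pi * ((n : ℝ) + 1) * Real.Gamma (((n : ℝ) + 1) / 2))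
      = M / ((n:ℝ) * ((n:ℝ)+1)) := by
    rw [hM]
    field_simp
  rw [hRHS]
  gcongr
  -- ⊢ |(1 - x^2) * eval x (derivative (legP n))| ≤ M
  have hfinal : (Hh n).eval 0 ≤ M^2 := by
    rcases Nat.even_or_odd n with he | ho
    · -- even case
      obtain ⟨m, hm2⟩ := he
      have h2 : n = 2*m := by omega
      subst h2
      have hm : 1 ≤ m := by omega
      have hMval : M = 2 * 4^m * ((m.factorial:ℝ))^2 / (Real.pi * (2*m).factorial) := by
        have e1 : ((2*m:ℕ):ℝ)/2 = ((m-1:ℕ):ℝ) + 1 := by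
          push_cast [Nat.cast_sub hm]
          ring
        have e2 : (((2*m:ℕ):ℝ)+1)/2 = (m:ℝ) + 1/2 := by push_cast; ring
        have hmf : (m.factorial : ℝ) = (m:ℝ) * ((m-1).factorial : ℝ) := by
          exact_mod_cast (Nat.mul_factorial_pred (by omega : m ≠ 0)).symm
        rw [hM, e1, e2, Real.Gamma_nat_eq_factorial, Gamma_nat_add_half, ← hsq2, hmf]
        have hf1 : ((m-1).factorial : ℝ) ≠ 0 := Nat.cast_ne_zero.2 (m-1).factorial_ne_zero
        have hf2 : (((2*m).factorial : ℝ)) ≠ 0 := Nat.cast_ne_zero.2 (2*m).factorial_ne_zero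
        push_cast
        field_simp
        simp only [Real.sqrt_mul_self hsqpi.le, Real.sqrt_sq hsqpi.le] <;> ring
      rw [Hh_eval0, legP_deriv0_even, legP_eval0_even, hMval]
      have hneg : ((-1:ℝ)^m)^2 = 1 := by
        rw [← pow_mul, mul_comm, pow_mul]; norm_num
      have hL : ((-1:ℝ)^m * ((2*m).choose m : ℝ) / 4^m)^2
          = (((2*m).choose m : ℝ) / 4^m)^2 := by
        rw [mul_div_assoc, mul_pow, hneg, one_mul]
      rw [hL]
      push_cast
      linarith [even_case m hm]
    · -- odd case
      obtain ⟨m, hm2⟩ := ho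
      subst hm2
      have hMval : M = (2*(m:ℝ)+1) * ((2*m).factorial:ℝ) / (4^m * ((m.factorial:ℝ))^2) := by
        have e1 : ((2*m+1:ℕ):ℝ)/2 = (m:ℝ) + 1/2 := by push_cast; ring
        have e2 : (((2*m+1:ℕ):ℝ)+1)/2 = ((m:ℕ):ℝ) + 1 := by push_cast; ring
        rw [hM, e1, e2, Real.Gamma_nat_eq_factorial, Gamma_nat_add_half]
        have hf1 : ((m.factorial : ℝ)) ≠ 0 := Nat.cast_ne_zero.2 m.factorial_ne_zero
        have hf2 : (((2*m).factorial : ℝ)) ≠ 0 := Nat.cast_ne_zero.2 (2*m).factorial_ne_zero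
        push_cast
        field_simp
      rw [Hh_eval0, legP_deriv0_odd, legP_eval0_odd, hMval]
      have hneg : ((-1:ℝ)^m)^2 = 1 := by
        rw [← pow_mul, mul_comm, pow_mul]; norm_num
      have hL : ((-1:ℝ)^m * (2*(m:ℝ)+2) * (((2*m+1).choose (m+1)) : ℝ) / 2^(2*m+1))^2
          = ((2*(m:ℝ)+2) * (((2*m+1).choose (m+1)) : ℝ) / 2^(2*m+1))^2 := by
        field_simp
        linear_combination ((((2*m+1).choose (m+1)) : ℝ)^2) * hneg
      have hob := odd_base m
      have hob2 := congrArg (fun y : ℝ => y^2) hob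
      push_cast
      push_cast at hL hob2
      nlinarith [hL, hob2]
  have hg2 : ((1-x^2) * (derivative (legP n)).eval x)^2 ≤ M^2 :=
    le_trans (g_sq_le n hn hx) hfinal
  have habs : |(1-x^2) * (derivative (legP n)).eval x|
      = Real.sqrt (((1-x^2) * (derivative (legP n)).eval x)^2) :=
    (Real.sqrt_sq_eq_abs _).symm
  calc |(1-x^2) * (derivative (legP n)).eval x|
      = Real.sqrt (((1-x^2) * (derivative (legP n)).eval x)^2) := habs
    _ ≤ Real.sqrt (M^2) := Real.sqrt_le_sqrt hg2
    _ = M := Real.sqrt_sq hMpos.le
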